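/- Let X be the four-dimensional process X_t = (t, ∫_0^t ξ_s ds, ξ_t) where ξ solves the Vasiček SDE dξ_t = κ(θ - ξ_t)dt + σ dW_t. If the forward rate is defined by f(t,T) = f(0,T) + ∫_0^t φ(s,T)·dX_s with φ(s,T) = (φ_1(s,T), φ_2(s,T), φ_3(s,T)) = ((σ²/κ)(e^{-κ(T-s)} - e^{-2κ(T-s)}) - κθ e^{-κ(T-s)}, κ e^{-κ(T-s)}, e^{-κ(T-s)}), then the short rate satisfies f(t,t) = ξ_t almost surely, provided f(0,T) is chosen as the Vasiček initial forward curve f(0,T) = θ + (ξ_0 - θ)e^{-κT} - (σ²/(2κ²))(1-e^{-κT})². -/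

import Mathlib

open Real intervalIntegral

set_option maxHeartbeats 1000000

private lemma int_exp_lin (c t : ℝ) (hc : c ≠ 0) :
    ∫ s in (0:ℝ)..t, exp (c * s - c * t) = (1 - exp (-(c * t))) / c := by
  have hderiv : ∀ x ∈ Set.uIcc (0:ℝ) t,
      HasDerivAt (fun s => exp (c * s - c * t) / c) (exp (c * x - c * t)) x := by
    intro x _
    have h1 : HasDerivAt (fun s : ℝ => c * s - c * t) c x := by
      simpa using ((hasDerivAt_id x).const_mul c).sub_const (c * t)
    have h2 := (h1.exp).div_const c
    simpa [mul_div_assoc, mul_div_cancel_right₀, hc] using h2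
  have hint : IntervalIntegrable (fun s => exp (c * s - c * t)) MeasureTheory.volume 0 t :=
    (Real.continuous_exp.comp (by fun_prop)).intervalIntegrable 0 t
  rw [intervalIntegral.integral_eq_sub_of_hasDerivAt hderiv hint]
  have : c * t - c * t = 0 := by ring
  rw [this, Real.exp_zero]
  have : c * 0 - c * t = -(c * t) := by ring
  rw [this]
  ring


/-- Consistency of the Vasiček HJM specification: with driving process
`X_t = (t, ∫_0^t ξ_s ds, ξ_t)`, where `ξ` solves the Vasiček SDE
`dξ_t = κ(θ - ξ_t)dt + σ dW_t` (formulated pathwise for a continuous path `W`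
of Brownian motion, the stochastic integral `∫_0^t φ₃(s,T) dξ_s` being defined
via the SDE and integration by parts for the `dW`-part), the forward rate
`f(t,T) = f(0,T) + ∫_0^t φ(s,T)·dX_s` with
`φ(s,T) = ((σ²/κ)(e^{-κ(T-s)} - e^{-2κ(T-s)}) - κθ e^{-κ(T-s)},
 κ e^{-κ(T-s)}, e^{-κ(T-s)})` and initial curve
`f(0,T) = θ + (ξ₀ - θ)e^{-κT} - (σ²/(2κ²))(1 - e^{-κT})²`
satisfies `f(t,t) = ξ_t`. -/
theorem vasicek_short_rate_consistency
    (κ θ σ ξ0 : ℝ) (hκ : 0 < κ) (hθ : 0 < θ) (hσ : 0 < σ)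
    (W ξ : ℝ → ℝ) (hW_cont : Continuous W) (hW0 : W 0 = 0)
    (hξ_cont : Continuous ξ)
    -- pathwise Vasiček SDE: ξ_t = ξ₀ + ∫_0^t κ(θ - ξ_s) ds + σ W_t
    (hSDE : ∀ t : ℝ, 0 ≤ t →
      ξ t = ξ0 + (∫ s in (0:ℝ)..t, κ * (θ - ξ s)) + σ * W t)
    (f : ℝ → ℝ → ℝ)
    (hf : ∀ t T : ℝ, f t T
      = (θ + (ξ0 - θ) * exp (-κ * T) - (σ ^ 2 / (2 * κ ^ 2)) * (1 - exp (-κ * T)) ^ 2)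
        -- ∫_0^t φ₁(s,T) ds
        + (∫ s in (0:ℝ)..t,
            ((σ ^ 2 / κ) * (exp (-κ * (T - s)) - exp (-2 * κ * (T - s)))
              - κ * θ * exp (-κ * (T - s))))
        -- ∫_0^t φ₂(s,T) ξ_s ds
        + (∫ s in (0:ℝ)..t, κ * exp (-κ * (T - s)) * ξ s)
        -- ∫_0^t φ₃(s,T) dξ_s, with the dW-part integrated by parts
        + (∫ s in (0:ℝ)..t, exp (-κ * (T - s)) * (κ * (θ - ξ s)))
        + σ * (exp (-κ * (T - t)) * W t
            - (∫ s in (0:ℝ)..t, κ * exp (-κ * (T - s)) * W s))) :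
    ∀ t : ℝ, 0 ≤ t → f t t = ξ t := by
  intro t ht
  have hκ' : κ ≠ 0 := ne_of_gt hκ
  set a : ℝ := exp (-(κ * t)) with ha
  -- Step 1: the first three integrals combine
  have hcont1 : Continuous fun s : ℝ =>
      (σ ^ 2 / κ) * (exp (-κ * (t - s)) - exp (-2 * κ * (t - s))) - κ * θ * exp (-κ * (t - s)) := by
    continuity
  have hcont2 : Continuous fun s : ℝ => κ * exp (-κ * (t - s)) * ξ s := by fun_prop
  have hcont3 : Continuous fun s : ℝ => exp (-κ * (t - s)) * (κ * (θ - ξ s)) := by fun_prop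
  have hsum :
      (∫ s in (0:ℝ)..t,
          ((σ ^ 2 / κ) * (exp (-κ * (t - s)) - exp (-2 * κ * (t - s)))
            - κ * θ * exp (-κ * (t - s))))
        + (∫ s in (0:ℝ)..t, κ * exp (-κ * (t - s)) * ξ s)
        + (∫ s in (0:ℝ)..t, exp (-κ * (t - s)) * (κ * (θ - ξ s)))
      = ∫ s in (0:ℝ)..t, (σ ^ 2 / κ) * (exp (κ * s - κ * t) - exp (2 * κ * s - 2 * κ * t)) := by
    rw [← intervalIntegral.integral_add (hcont1.intervalIntegrable 0 t)
        (hcont2.intervalIntegrable 0 t),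
      ← intervalIntegral.integral_add (f := fun s => (σ ^ 2 / κ) * (exp (-κ * (t - s)) - exp (-2 * κ * (t - s))) - κ * θ * exp (-κ * (t - s)) + κ * exp (-κ * (t - s)) * ξ s)
        ((hcont1.add hcont2).intervalIntegrable 0 t) (hcont3.intervalIntegrable 0 t)]
    apply intervalIntegral.integral_congr
    intro s _
    have e1 : -κ * (t - s) = κ * s - κ * t := by ring
    have e2 : -2 * κ * (t - s) = 2 * κ * s - 2 * κ * t := by ring
    simp only [e1, e2]
    ring
  -- Step 2: evaluate the deterministic integral
  have hval :
      (∫ s in (0:ℝ)..t, (σ ^ 2 / κ) * (exp (κ * s - κ * t) - exp (2 * κ * s - 2 * κ * t)))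
        = (σ ^ 2 / (2 * κ ^ 2)) * (1 - a) ^ 2 := by
    have hsplit :
        (∫ s in (0:ℝ)..t, (σ ^ 2 / κ) * (exp (κ * s - κ * t) - exp (2 * κ * s - 2 * κ * t)))
        = (σ ^ 2 / κ) * ((∫ s in (0:ℝ)..t, exp (κ * s - κ * t))
            - ∫ s in (0:ℝ)..t, exp ((2 * κ) * s - (2 * κ) * t)) := by
      have c1 : Continuous fun s : ℝ => exp (κ * s - κ * t) := by fun_prop
      have c2 : Continuous fun s : ℝ => exp (2 * κ * s - 2 * κ * t) := by fun_prop
      rw [intervalIntegral.integral_const_mul, intervalIntegral.integral_sub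
        (c1.intervalIntegrable 0 t) (c2.intervalIntegrable 0 t)]
    rw [hsplit, int_exp_lin κ t hκ', int_exp_lin (2 * κ) t (by positivity)]
    have hsq : exp (-(2 * κ * t)) = a ^ 2 := by
      rw [ha, sq, ← Real.exp_add]
      congr 1
      ring
    rw [hsq]
    field_simp
    ring
  -- Step 3: solve the ODE part
  set G : ℝ → ℝ := fun y => ξ0 + ∫ s in (0:ℝ)..y, κ * (θ - ξ s) with hG
  have hcontκξ : Continuous fun s => κ * (θ - ξ s) := by fun_prop
  have hcontEW : Continuous fun s => exp (κ * s) * W s := by fun_prop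
  have hGcont : Continuous G := by
    apply continuous_const.add
    exact intervalIntegral.continuous_primitive (fun a b => hcontκξ.intervalIntegrable a b) 0
  have hGderiv : ∀ y : ℝ, HasDerivAt G (κ * (θ - ξ y)) y := by
    intro y
    apply HasDerivAt.const_add
    exact intervalIntegral.integral_hasDerivAt_right (hcontκξ.intervalIntegrable 0 y)
      (hcontκξ.stronglyMeasurableAtFilter _ _) hcontκξ.continuousAt
  set J : ℝ → ℝ := fun y => ∫ s in (0:ℝ)..y, exp (κ * s) * W s with hJ
  have hJcont : Continuous J :=
    intervalIntegral.continuous_primitive (fun a b => hcontEW.intervalIntegrable a b) 0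
  have hJderiv : ∀ y : ℝ, HasDerivAt J (exp (κ * y) * W y) y := fun y =>
    intervalIntegral.integral_hasDerivAt_right (hcontEW.intervalIntegrable 0 y)
      (hcontEW.stronglyMeasurableAtFilter _ _) hcontEW.continuousAt
  set h : ℝ → ℝ := fun y => exp (κ * y) * (G y - θ) + σ * κ * J y with hh
  have hhderiv : ∀ y : ℝ, 0 ≤ y → HasDerivAt h 0 y := by
    intro y hy
    have hE : HasDerivAt (fun s : ℝ => exp (κ * s)) (κ * exp (κ * y)) y := by
      simpa [mul_comm] using ((hasDerivAt_id y).const_mul κ).exp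
    have hd : HasDerivAt h
        (κ * exp (κ * y) * (G y - θ) + exp (κ * y) * (κ * (θ - ξ y))
          + σ * κ * (exp (κ * y) * W y)) y :=
      (hE.mul ((hGderiv y).sub_const θ)).add ((hJderiv y).const_mul (σ * κ))
    have hξy : ξ y = G y + σ * W y := by
      rw [hSDE y hy]
    have : κ * exp (κ * y) * (G y - θ) + exp (κ * y) * (κ * (θ - ξ y))
        + σ * κ * (exp (κ * y) * W y) = 0 := by
      rw [hξy]; ring
    rwa [this] at hd
  have hconst : h t = h 0 := by
    have := eq_of_has_deriv_right_eq (f := h) (f' := fun _ => (0:ℝ)) (g := fun _ => h 0)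
      (a := 0) (b := t)
      (fun x hx => (hhderiv x hx.1).hasDerivWithinAt)
      (fun x _ => (hasDerivAt_const x (h 0)).hasDerivWithinAt)
      (by fun_prop) continuousOn_const rfl
    exact this t (Set.mem_Icc.mpr ⟨ht, le_refl t⟩)
  have hh0 : h 0 = ξ0 - θ := by
    simp [hh, hG, hJ]
  have hId : exp (κ * t) * (G t - θ) + σ * κ * J t = ξ0 - θ := by
    rw [← hh0]; exact hconst
  have hinv : a * exp (κ * t) = 1 := by
    rw [ha, ← Real.exp_add]; simp
  have hGt : G t = θ + (ξ0 - θ) * a - σ * κ * a * J t := by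
    linear_combination a * hId - (G t - θ) * hinv
  -- Step 4: the W-integral
  have hWint : (∫ s in (0:ℝ)..t, κ * exp (-κ * (t - s)) * W s) = κ * a * J t := by
    have key : ∀ s : ℝ, κ * exp (-κ * (t - s)) * W s = (κ * a) * (exp (κ * s) * W s) := by
      intro s
      rw [ha, show -κ * (t - s) = -(κ * t) + κ * s by ring, Real.exp_add]
      ring
    simp only [key, hJ]
    rw [intervalIntegral.integral_const_mul]
  -- Final assembly
  have hξt : ξ t = G t + σ * W t := by
    rw [hSDE t ht]
  rw [hf t t, hξt]
  have htt : -κ * (t - t) = 0 := by ring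
  rw [htt, Real.exp_zero]
  have haa : exp (-κ * t) = a := by rw [ha]; ring_nf
  rw [haa]
  linear_combination hsum + hval - σ * hWint - hGt
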